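/- Define J_{x/a}(q) := q·N_q(x/a) + (1−q)·D_q(x/a) for a rational x/a > 1 in lowest terms. Then for Farey neighbors α, β > 1 (or β = 1/0), J_{α♯β}(q) = J_α(q) + q^{⌈N(α)/N(β)⌉}·J_β(q), where N denotes the numerator; moreover J₁(q) = 1 and J_∞(q) = q. -/
import Mathlib


open Polynomial

/-- The `q`-integer `[c]_q = 1 + q + ⋯ + q^{c-1}` as a polynomial in `ℤ[q]`. -/
noncomputable def qInt (c : ℕ) : Polynomial ℤ := ∑ i ∈ Finset.range c, X ^ i

/-- The polynomial `(a, b)_q ∈ ℤ[q]` associated to a pair of coprime positive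
integers: `(1, n)_q = (n, 1)_q = [n+1]_q`; if `a < b` then
`(a,b)_q = (a-r, r)_q + q·(a, b-a)_q` with `r = b % a`; if `a > b` then
`(a,b)_q = (a-b, b)_q + q^⌈a/b⌉·(r, b-r)_q` with `r = a % b`.
(Values on non-coprime or zero inputs are junk.) -/
noncomputable def W : ℕ → ℕ → Polynomial ℤ
  | 1, b => qInt (b + 1)
  | a, 1 => qInt (a + 1)
  | 0, _ => 0
  | _, 0 => 0
  | a + 2, b + 2 =>
    if a < b then
      W (a + 2 - (b + 2) % (a + 2)) ((b + 2) % (a + 2)) + X * W (a + 2) (b - a)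
    else
      W (a - b) (b + 2) +
        X ^ ((a + 2 + (b + 2) - 1) / (b + 2)) *
          W ((a + 2) % (b + 2)) (b + 2 - (a + 2) % (b + 2))
  termination_by a b => a + b
  decreasing_by
  · have := Nat.mod_lt (b + 2) (show 0 < a + 2 by omega); omega
  · omega
  · omega
  · have := Nat.mod_lt (a + 2) (show 0 < b + 2 by omega); omega

/-- The sequence of digits of the negative continued fraction expansion
`x/a = [c₁, …, c_l]⁻` (each `cᵢ = ⌈·⌉` of the current fraction). By convention
`ncfDigits x 0 = []` (for `1/0 = ∞`) and `ncfDigits x 1 = [x]`. -/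
def ncfDigits : ℕ → ℕ → List ℕ
  | _, 0 => []
  | x, 1 => [x]
  | x, a + 2 =>
      (x + (a + 2) - 1) / (a + 2) ::
        ncfDigits (a + 2) ((x + (a + 2) - 1) / (a + 2) * (a + 2) - x)
  termination_by x a => a
  decreasing_by
    have := Nat.div_mul_le_self (x + (a + 2) - 1) (a + 2); omega

/-- The (coprime) numerator and denominator of the Morier-Genoud–Ovsienko
`q`-deformation of the negative continued fraction `[c₁, …, c_l]⁻`, computed by
the continuant recursion `(N, D) ↦ ([c]_q·N - q^{c-1}·D, N)`, with `(1, 0)` for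
the empty list. -/
noncomputable def qCF : List ℕ → Polynomial ℤ × Polynomial ℤ
  | [] => (1, 0)
  | c :: rest =>
      let p := qCF rest
      (qInt c * p.1 - X ^ (c - 1) * p.2, p.1)

/-- Numerator `N_q(x/a)` of the Morier-Genoud–Ovsienko `q`-rational `[x/a]_q`. -/
noncomputable def Nq (x a : ℕ) : Polynomial ℤ := (qCF (ncfDigits x a)).1

/-- Denominator `D_q(x/a)` of the Morier-Genoud–Ovsienko `q`-rational `[x/a]_q`. -/
noncomputable def Dq (x a : ℕ) : Polynomial ℤ := (qCF (ncfDigits x a)).2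

/-- The normalized Jones polynomial `J_{x/a}(q) = q·N_q(x/a) + (1-q)·D_q(x/a)`. -/
noncomputable def Jq (x a : ℕ) : Polynomial ℤ := X * Nq x a + (1 - X) * Dq x a

set_option linter.unusedVariables false

lemma ncfDigits_zero (x : ℕ) : ncfDigits x 0 = [] := by rw [ncfDigits]
lemma ncfDigits_one (x : ℕ) : ncfDigits x 1 = [x] := by rw [ncfDigits]
lemma ncfDigits_eq (x A : ℕ) (hA : 2 ≤ A) :
    ncfDigits x A = (x + A - 1) / A :: ncfDigits A ((x + A - 1) / A * A - x) := by
  obtain ⟨a, rfl⟩ : ∃ a, A = a + 2 := ⟨A - 2, by omega⟩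
  rw [ncfDigits]
lemma qCF_cons (c : ℕ) (L : List ℕ) :
    qCF (c :: L) = (qInt c * (qCF L).1 - X ^ (c-1) * (qCF L).2, (qCF L).1) := by
  rw [qCF]

lemma qInt_zero : qInt 0 = 0 := by simp [qInt]
lemma qInt_one : qInt 1 = 1 := by simp [qInt]
lemma qInt_succ (n : ℕ) : qInt (n+1) = qInt n + X ^ n := Finset.sum_range_succ _ _
lemma qInt_two : qInt 2 = 1 + X := by
  rw [show (2:ℕ) = 1+1 from rfl, qInt_succ, qInt_one]; ring
lemma qInt_succ' (n : ℕ) : qInt (n+1) = 1 + X * qInt n := by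
  simp only [qInt, geom_sum_succ]; ring

lemma Nq_one_zero : Nq 1 0 = 1 := by simp [Nq, ncfDigits_zero, qCF]
lemma Dq_one_zero : Dq 1 0 = 0 := by simp [Dq, ncfDigits_zero, qCF]
lemma Nq_int (x : ℕ) : Nq x 1 = qInt x := by
  simp [Nq, ncfDigits_one, qCF, Nq_one_zero, Dq_one_zero]
lemma Dq_int (x : ℕ) : Dq x 1 = 1 := by
  simp [Dq, ncfDigits_one, qCF]

lemma ceil_div_eq (Y A c : ℕ) (hA : 1 ≤ A) (h1 : c*A < Y + A) (h2 : Y ≤ c*A) :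
    (Y + A - 1)/A = c := by
  apply Nat.div_eq_of_lt_le
  · omega
  · have : (c+1)*A = c*A + A := by ring
    omega

lemma Nq_cons (x A : ℕ) (hA : 2 ≤ A) :
    Nq x A = qInt ((x+A-1)/A) * Nq A (((x+A-1)/A)*A - x)
      - X ^ ((x+A-1)/A - 1) * Dq A (((x+A-1)/A)*A - x) := by
  rw [Nq, ncfDigits_eq x A hA, qCF_cons]; rfl
lemma Dq_cons (x A : ℕ) (hA : 2 ≤ A) :
    Dq x A = Nq A (((x+A-1)/A)*A - x) := by
  rw [Dq, ncfDigits_eq x A hA, qCF_cons]; rfl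

lemma Nq_Dq_succ_self (m : ℕ) : Nq (m+1) m = qInt (m+1) ∧ Dq (m+1) m = qInt m := by
  induction m with
  | zero => simpa [qInt_zero, qInt_one] using ⟨Nq_one_zero, Dq_one_zero⟩
  | succ k ih =>
    cases k with
    | zero => exact ⟨by rw [Nq_int], by rw [Dq_int, qInt_one]⟩
    | succ j =>
      have hA : 2 ≤ j + 2 := by omega
      have hc : ((j+1+1+1) + (j+2) - 1)/(j+2) = 2 := by
        apply ceil_div_eq <;> omega
      have ht : 2*(j+2) - (j+1+1+1) = j+1 := by omega
      constructor
      · rw [show (j+1+1 : ℕ) = j+2 from rfl, Nq_cons _ _ hA, hc, ht, ih.1, ih.2,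
          qInt_succ (j+2), qInt_succ (j+1), qInt_two]
        ring
      · rw [show (j+1+1 : ℕ) = j+2 from rfl, Dq_cons _ _ hA, hc, ht, ih.1]

/-- For Farey neighbors `x/a < y/b` (both `>1`), `⌈x/y⌉ = ⌈a/b⌉`. -/
lemma ceil_eq (x a y b : ℕ) (h : a*y = b*x+1) (hb : 1 ≤ b) (hy : 2 ≤ y) :
    (x+y-1)/y = (a+b-1)/b := by
  have ha : 1 ≤ a := by nlinarith
  have hdm := Nat.div_add_mod (a+b-1) b
  have hm : (a+b-1) % b < b := Nat.mod_lt _ (by omega)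
  generalize hq : (a+b-1)/b = n at hdm ⊢
  generalize (a+b-1) % b = m at hdm hm
  have hab : b*n + m + 1 = a + b := by omega
  have h1 : a ≤ b*n := by omega
  -- x < n*y
  have hx1 : b*x < b*(n*y) := by
    have h2 : a*y ≤ (b*n)*y := Nat.mul_le_mul_right y h1
    calc b*x < b*x + 1 := by omega
    _ = a*y := h.symm
    _ ≤ (b*n)*y := h2
    _ = b*(n*y) := by ring
  have hx1' : x < n*y := lt_of_mul_lt_mul_left hx1 (Nat.zero_le b)
  -- n*y < x + y
  have hx2 : b*(n*y) < b*(x+y) := by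
    have e1 : b*(n*y) + (m+1)*y = (a+b)*y := by
      rw [← hab]; ring
    have e2 : (a+b)*y = b*(x+y) + 1 := by rw [add_mul, h]; ring
    have e3 : 2 ≤ (m+1)*y := by nlinarith
    omega
  have hx2' : n*y < x+y := lt_of_mul_lt_mul_left hx2 (Nat.zero_le b)
  apply Nat.div_eq_of_lt_le
  · omega
  · have : (n+1)*y = n*y + y := by ring
    omega

lemma NqDq_farey : ∀ s x a y b : ℕ, x + y ≤ s → a*y = b*x+1 → 1 ≤ a → a < x →
    ((1 ≤ b ∧ b < y) ∨ (b = 0 ∧ y = 1)) →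
    Nq (x+y) (a+b) = Nq x a + X^((x+y-1)/y) * Nq y b ∧
    Dq (x+y) (a+b) = Dq x a + X^((x+y-1)/y) * Dq y b := by
  intro s
  induction s with
  | zero => intro x a y b hs h ha hax hβ; exfalso; omega
  | succ s ih =>
    intro x a y b hs h ha hax hβ
    rcases hβ with ⟨hb, hby⟩ | ⟨rfl, rfl⟩
    · -- b ≥ 1
      rcases Nat.lt_or_ge a 2 with ha1 | ha2
      · -- a = 1
        have ha1 : a = 1 := by omega
        subst ha1
        have hy : y = b*x + 1 := by omega
        have hx2 : 2 ≤ x := by omega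
        have hxb : x ≤ b*x := Nat.le_mul_of_pos_left x hb
        have hK : (x+y-1)/y = 1 := by
          apply Nat.div_eq_of_lt_le <;> omega
        rw [hK]
        have he : (x+1)*(1+b) = b*x + x + b + 1 := by ring
        have hcμ : ((x+y) + (1+b) - 1)/(1+b) = x+1 :=
          ceil_div_eq _ _ _ (by omega) (by omega) (by omega)
        have htμ : (x+1)*(1+b) - (x+y) = b := by omega
        have hNμ := Nq_cons (x+y) (1+b) (by omega)
        have hDμ := Dq_cons (x+y) (1+b) (by omega)
        rw [hcμ, htμ] at hNμ hDμ
        rw [Nat.add_sub_cancel] at hNμ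
        rw [show (1+b : ℕ) = b+1 from by omega] at hNμ hDμ
        rw [show (1+b : ℕ) = b+1 from by omega, hNμ, hDμ,
          (Nq_Dq_succ_self b).1, (Nq_Dq_succ_self b).2, Nq_int, Dq_int]
        rcases Nat.lt_or_ge b 2 with hb1 | hb2
        · -- b = 1
          have hb1 : b = 1 := by omega
          subst hb1
          rw [show y = x+1 from by omega, Nq_int, Dq_int]
          constructor
          · rw [show (1+1:ℕ) = 2 from rfl, qInt_two, qInt_one, qInt_succ x]; ring
          · rw [show (1+1:ℕ) = 2 from rfl, qInt_two]; ring
        · -- b ≥ 2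
          obtain ⟨j, rfl⟩ : ∃ j, b = j+2 := ⟨b-2, by omega⟩
          have he2 : (x+1)*(j+2) = (j+2)*x + (j+2) := by ring
          have hcβ : (y + (j+2) - 1)/(j+2) = x+1 :=
            ceil_div_eq _ _ _ (by omega) (by omega) (by omega)
          have htβ : (x+1)*(j+2) - y = j+1 := by omega
          have hNβ := Nq_cons y (j+2) (by omega)
          have hDβ := Dq_cons y (j+2) (by omega)
          rw [hcβ, htβ] at hNβ hDβ
          rw [Nat.add_sub_cancel] at hNβ
          rw [hNβ, hDβ, show (j+2:ℕ) = (j+1)+1 from rfl,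
            (Nq_Dq_succ_self (j+1)).1, (Nq_Dq_succ_self (j+1)).2]
          constructor
          · rw [qInt_succ' (j+1+1), qInt_succ' (j+1), qInt_succ x]; ring
          · rw [qInt_succ' (j+1+1), qInt_succ' (j+1)]; ring
      · -- a ≥ 2 : the generic simultaneous step
        obtain ⟨c, hc⟩ : ∃ c, (x+a-1)/a = c := ⟨_, rfl⟩
        have hdm := Nat.div_add_mod (x+a-1) a
        have hmlt : (x+a-1) % a < a := Nat.mod_lt _ (by omega)
        rw [hc] at hdm
        have hac : a*c = c*a := by ring
        have hF1 : c*a ≤ x + a - 1 := by omega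
        have hF2 : x + a - 1 < c*a + a := by omega
        have hxle : x ≤ c*a := by omega
        have hxlt : x < c*a := by
          rcases Nat.lt_or_ge x (c*a) with h' | h'
          · exact h'
          · exfalso
            have hxeq : x = c*a := by omega
            have d1 : a ∣ a*y := Dvd.intro y rfl
            have d2 : a ∣ b*x := ⟨b*c, by rw [hxeq]; ring⟩
            have h1 : a*y - b*x = 1 := by omega
            have := Nat.le_of_dvd (by omega) (h1 ▸ Nat.dvd_sub d1 d2)
            omega
        -- y ≤ c*b
        have hb1 : (x+1)*b ≤ (c*a)*b := Nat.mul_le_mul_right b (by omega)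
        have hyle : y ≤ c*b := by
          have h6 : a*y ≤ a*(c*b) := by
            have e1 : (x+1)*b = b*x + b := by ring
            have e2 : (c*a)*b = a*(c*b) := by ring
            omega
          exact Nat.le_of_mul_le_mul_left h6 (by omega)
        -- c*b < y + b
        have hygt : c*b < y + b := by
          have h8 : (c*a+1)*b ≤ (x+a)*b := Nat.mul_le_mul_right b (by omega)
          have h7 : a*(c*b) < a*(y+b) := by
            have e1 : (c*a+1)*b = a*(c*b) + b := by ring
            have e2 : (x+a)*b = b*x + a*b := by ring
            have e3 : a*(y+b) = a*y + a*b := by ring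
            omega
          exact Nat.lt_of_mul_lt_mul_left h7
        -- new Farey relation
        have hZ : (a:ℤ)*y = b*x + 1 := by exact_mod_cast h
        have hnew : (c*a - x)*b = (c*b - y)*a + 1 := by
          zify [hxle, hyle]
          linear_combination hZ
        -- new beta hypothesis
        have hβ' : (1 ≤ c*b - y ∧ c*b - y < b) ∨ (c*b - y = 0 ∧ b = 1) := by
          rcases Nat.lt_or_ge y (c*b) with h' | h'
          · left; omega
          · right
            have hyeq : y = c*b := by omega
            have d1 : b ∣ a*y := ⟨a*c, by rw [hyeq]; ring⟩
            have d2 : b ∣ b*x := Dvd.intro x rfl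
            have h1 : a*y - b*x = 1 := by omega
            have := Nat.le_of_dvd (by omega) (h1 ▸ Nat.dvd_sub d1 d2)
            omega
        have IH := ih a (c*a - x) b (c*b - y) (by omega) hnew (by omega) (by omega) hβ'
        have hKeq : (x+y-1)/y = (a+b-1)/b := ceil_eq x a y b h hb (by omega)
        -- digit of the mediant
        have hmul : c*(a+b) = c*a + c*b := by ring
        have hcμ : ((x+y) + (a+b) - 1)/(a+b) = c :=
          ceil_div_eq _ _ _ (by omega) (by omega) (by omega)
        have htμ : c*(a+b) - (x+y) = (c*a - x) + (c*b - y) := by omega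
        have hNμ := Nq_cons (x+y) (a+b) (by omega)
        have hDμ := Dq_cons (x+y) (a+b) (by omega)
        rw [hcμ, htμ] at hNμ hDμ
        have hNα := Nq_cons x a ha2
        have hDα := Dq_cons x a ha2
        rw [hc] at hNα hDα
        -- beta unfolding (two cases, same shape)
        have hNβ : Nq y b = qInt c * Nq b (c*b - y) - X^(c-1) * Dq b (c*b - y) ∧
            Dq y b = Nq b (c*b - y) := by
          rcases Nat.lt_or_ge b 2 with hb1 | hb2
          · have hb1 : b = 1 := by omega
            subst hb1
            have hyc : y = c := by omega
            have ht0 : c*1 - y = 0 := by omega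
            rw [ht0, hyc, Nq_int, Dq_int, Nq_one_zero, Dq_one_zero]
            constructor <;> ring
          · have hcβ : (y + b - 1)/b = c := ceil_div_eq _ _ _ (by omega) hygt hyle
            have hN := Nq_cons y b hb2
            have hD := Dq_cons y b hb2
            rw [hcβ] at hN hD
            exact ⟨hN, hD⟩
        rw [hNμ, hDμ, hNα, hDα, hNβ.1, hNβ.2, hKeq, IH.1, IH.2]
        constructor <;> ring
    · -- b = 0, y = 1, hence a = 1
      have ha1 : a = 1 := by omega
      subst ha1
      rw [show (1+0 : ℕ) = 1 from rfl, show (x+1-1)/1 = x from by omega,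
        Nq_int, Nq_int, Dq_int, Dq_int, Nq_one_zero, Dq_one_zero, qInt_succ]
      constructor <;> ring

/-- With `J_{x/a}(q) = q·N_q(x/a) + (1-q)·D_q(x/a)`: for Farey neighbors
`α = x/a > 1` and `β = y/b > 1` (or `β = 1/0`),
`J_{α♯β}(q) = J_α(q) + q^{⌈N(α)/N(β)⌉}·J_β(q)` (here `⌈x/y⌉ = (x + y - 1)/y`);
moreover `J₁(q) = 1` and `J_∞(q) = q`. -/
theorem Jq_farey (x a y b : ℕ) (h : a * y = b * x + 1)
    (ha : 1 ≤ a) (hax : a < x)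
    (hβ : (1 ≤ b ∧ b < y) ∨ (b = 0 ∧ y = 1)) :
    Jq (x + y) (a + b) = Jq x a + X ^ ((x + y - 1) / y) * Jq y b ∧
    Jq 1 1 = 1 ∧ Jq 1 0 = X := by
  refine ⟨?_, ?_, ?_⟩
  · obtain ⟨hN, hD⟩ := NqDq_farey (x+y) x a y b le_rfl h ha hax hβ
    rw [Jq, Jq, Jq, hN, hD]; ring
  · have hN : Nq 1 1 = 1 := by rw [Nq_int, qInt_one]
    have hD : Dq 1 1 = 1 := Dq_int 1
    rw [Jq, hN, hD]; ring
  · rw [Jq, Nq_one_zero, Dq_one_zero]; ring
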